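/- For all y ∈ ℝ, y·M(1, 3/2, y²/2) + √(π/2)·M(1/2, 1/2, y²/2) = √(2π)·e^{y²/2}·Φ(y), where Φ(y) = (1/√(2π))·∫_{−∞}^{y} e^{−s²/2} ds is the standard normal cumulative distribution function. -/

import Mathlib

open Real Filter Polynomial MeasureTheory

/-- Confluent hypergeometric function of the first kind,
`M(γ,β,z) = ∑ (γ)⁽ⁿ⁾ zⁿ / ((β)⁽ⁿ⁾ n!)`. -/
noncomputable def M (γ β z : ℝ) : ℝ :=
  ∑' n : ℕ, ((ascPochhammer ℝ n).eval γ * z ^ n) /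
    ((ascPochhammer ℝ n).eval β * (Nat.factorial n : ℝ))

/-- The standard normal cumulative distribution function. -/
noncomputable def Phi (y : ℝ) : ℝ :=
  (1 / Real.sqrt (2 * Real.pi)) * ∫ s in Set.Iic y, Real.exp (-s ^ 2 / 2)

open scoped Nat

namespace Stmt10Aux

noncomputable def g (n : ℕ) (y : ℝ) : ℝ := y ^ (2 * n + 1) / ((2 * n + 1)‼ : ℝ)

noncomputable def g' (n : ℕ) (y : ℝ) : ℝ :=
  ((2 * n + 1 : ℕ) : ℝ) * y ^ (2 * n) / ((2 * n + 1)‼ : ℝ)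

lemma df_pos (n : ℕ) : (0 : ℝ) < ((2 * n + 1)‼ : ℝ) := by
  exact_mod_cast Nat.doubleFactorial_pos _

lemma df_succ (n : ℕ) : (2 * (n + 1) + 1)‼ = (2 * n + 3) * (2 * n + 1)‼ := by
  rw [show 2 * (n + 1) + 1 = 2 * n + 1 + 2 by ring, Nat.doubleFactorial_add_two]

lemma df_ge (n : ℕ) : ((n + 1) * n ! : ℕ) ≤ (2 * n + 1)‼ := by
  induction n with
  | zero => simp [Nat.doubleFactorial]
  | succ n ih =>
    rw [df_succ]
    calc ((n + 1 + 1) * (n + 1)! : ℕ) = (n + 2) * ((n + 1) * n !) := by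
          rw [Nat.factorial_succ]
      _ ≤ (2 * n + 3) * ((n + 1) * n !) := Nat.mul_le_mul_right _ (by omega)
      _ ≤ (2 * n + 3) * (2 * n + 1)‼ := Nat.mul_le_mul_left _ ih

lemma df_ge_real (n : ℕ) : ((n : ℝ) + 1) * (n ! : ℝ) ≤ ((2 * n + 1)‼ : ℝ) := by
  exact_mod_cast df_ge n

lemma summable_u (R : ℝ) : Summable (fun n : ℕ => 2 * (R ^ 2) ^ n / (n ! : ℝ)) := by
  simpa [mul_div_assoc] using (Real.summable_pow_div_factorial (R ^ 2)).mul_left 2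

lemma g'_bound {R z : ℝ} (n : ℕ) (hz : |z| ≤ R) :
    ‖g' n z‖ ≤ 2 * (R ^ 2) ^ n / (n ! : ℝ) := by
  have hR : 0 ≤ R := le_trans (abs_nonneg z) hz
  have hd := df_pos n
  have hfac : (0 : ℝ) < (n ! : ℝ) := by exact_mod_cast Nat.factorial_pos n
  have hzpow : |z| ^ (2 * n) ≤ (R ^ 2) ^ n := by
    rw [pow_mul, ← abs_pow]
    have h1 : |z ^ 2| = |z| ^ 2 := abs_pow z 2
    rw [h1]
    gcongr
  have hnorm : ‖g' n z‖ = ((2 * n + 1 : ℕ) : ℝ) * |z| ^ (2 * n) / ((2 * n + 1)‼ : ℝ) := by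
    rw [g', Real.norm_eq_abs, abs_div, abs_mul, abs_pow, abs_of_pos hd,
      abs_of_nonneg (show (0 : ℝ) ≤ ((2 * n + 1 : ℕ) : ℝ) by positivity)]
  rw [hnorm, div_le_div_iff₀ hd hfac]
  have key : ((2 * n + 1 : ℕ) : ℝ) * (n ! : ℝ) ≤ 2 * ((2 * n + 1)‼ : ℝ) := by
    have := df_ge_real n
    push_cast
    nlinarith [hfac]
  have hnn : (0 : ℝ) ≤ ((2 * n + 1 : ℕ) : ℝ) := by positivity
  have hp : (0 : ℝ) ≤ (R ^ 2) ^ n := by positivity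
  calc ((2 * n + 1 : ℕ) : ℝ) * |z| ^ (2 * n) * (n ! : ℝ)
      ≤ ((2 * n + 1 : ℕ) : ℝ) * (R ^ 2) ^ n * (n ! : ℝ) :=
        mul_le_mul_of_nonneg_right (mul_le_mul_of_nonneg_left hzpow hnn) hfac.le
    _ = (((2 * n + 1 : ℕ) : ℝ) * (n ! : ℝ)) * (R ^ 2) ^ n := by ring
    _ ≤ (2 * ((2 * n + 1)‼ : ℝ)) * (R ^ 2) ^ n := by nlinarith [key]
    _ = 2 * (R ^ 2) ^ n * ((2 * n + 1)‼ : ℝ) := by ring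

lemma hasDerivAt_g (n : ℕ) (z : ℝ) : HasDerivAt (fun w => g n w) (g' n z) z := by
  have h := (hasDerivAt_pow (2 * n + 1) z).div_const ((2 * n + 1)‼ : ℝ)
  simpa [g, g'] using h

lemma summable_g' (z : ℝ) : Summable (fun n => g' n z) :=
  Summable.of_norm <| (summable_u |z|).of_nonneg_of_le (fun _ => norm_nonneg _)
    (fun n => g'_bound n le_rfl)

lemma summable_g (z : ℝ) : Summable (fun n => g n z) := by
  apply Summable.of_norm
  apply ((summable_u |z|).mul_left |z|).of_nonneg_of_le (fun n => norm_nonneg _)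
  intro n
  have hd := df_pos n
  have hfac : (0 : ℝ) < (n ! : ℝ) := by exact_mod_cast Nat.factorial_pos n
  have hdn : (n ! : ℝ) ≤ ((2 * n + 1)‼ : ℝ) := by
    have := df_ge_real n
    nlinarith [hfac]
  have hnorm : ‖g n z‖ = |z| * (|z| ^ (2 * n) / ((2 * n + 1)‼ : ℝ)) := by
    rw [g, Real.norm_eq_abs, abs_div, abs_of_pos hd, abs_pow, pow_succ]
    ring
  rw [hnorm]
  apply mul_le_mul_of_nonneg_left ?_ (abs_nonneg z)
  calc |z| ^ (2 * n) / ((2 * n + 1)‼ : ℝ) ≤ |z| ^ (2 * n) / (n ! : ℝ) := by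
        rw [div_le_div_iff₀ hd hfac]
        nlinarith [pow_nonneg (abs_nonneg z) (2 * n), hdn, hfac]
    _ = (|z| ^ 2) ^ n / (n ! : ℝ) := by rw [pow_mul]
    _ ≤ 2 * (|z| ^ 2) ^ n / (n ! : ℝ) := by
        rw [mul_div_assoc]
        have h0 : (0 : ℝ) ≤ (|z| ^ 2) ^ n / (n ! : ℝ) := by positivity
        linarith

noncomputable def G (y : ℝ) : ℝ := ∑' n, g n y

lemma hasDerivAt_G (y : ℝ) : HasDerivAt G (1 + y * G y) y := by
  set R : ℝ := |y| + 1 with hR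
  have hRpos : 0 < R := by positivity
  have hball : ∀ z ∈ Metric.ball (0 : ℝ) R, |z| ≤ R := by
    intro z hz
    rw [Metric.mem_ball, Real.dist_eq, sub_zero] at hz
    exact hz.le
  have hymem : y ∈ Metric.ball (0 : ℝ) R := by
    rw [Metric.mem_ball, Real.dist_eq, sub_zero]
    linarith [abs_nonneg y]
  have key : HasDerivAt (fun z => ∑' n, g n z) (∑' n, g' n y) y :=
    hasDerivAt_tsum_of_isPreconnected (summable_u R)
      Metric.isOpen_ball ((convex_ball (0 : ℝ) R).isPreconnected)
      (fun n z _ => hasDerivAt_g n z)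
      (fun n z hz => g'_bound n (hball z hz))
      (Metric.mem_ball_self hRpos) (summable_g 0) hymem
  have hshift : ∑' n, g' n y = 1 + y * G y := by
    rw [Summable.tsum_eq_zero_add (summable_g' y)]
    congr 1
    · simp [g', Nat.doubleFactorial]
    · rw [G, ← tsum_mul_left]
      apply tsum_congr
      intro n
      have hd := df_pos n
      have h3 : (0 : ℝ) < (2 * (n : ℝ) + 3) := by positivity
      rw [g', g, df_succ]
      push_cast
      rw [show 2 * ((n : ℝ) + 1) + 1 = 2 * n + 3 by ring]
      rw [show 2 * (n + 1) = 2 * n + 1 + 1 by ring, pow_succ]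
      field_simp
  rw [← hshift]
  exact key

lemma G_eq (y : ℝ) :
    G y = Real.exp (y ^ 2 / 2) * ∫ s in (0 : ℝ)..y, Real.exp (-s ^ 2 / 2) := by
  set F : ℝ → ℝ := fun z =>
    Real.exp (-z ^ 2 / 2) * G z - ∫ s in (0 : ℝ)..z, Real.exp (-s ^ 2 / 2) with hF
  have hcont : Continuous fun s : ℝ => Real.exp (-s ^ 2 / 2) := by continuity
  have hderiv : ∀ z, HasDerivAt F 0 z := by
    intro z
    have h1 : HasDerivAt (fun z : ℝ => Real.exp (-z ^ 2 / 2))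
        (-z * Real.exp (-z ^ 2 / 2)) z := by
      have hpoly : HasDerivAt (fun z : ℝ => -z ^ 2 / 2) (-z) z := by
        have h := ((hasDerivAt_pow 2 z).neg).div_const 2
        refine h.congr_deriv ?_
        push_cast
        ring
      simpa [mul_comm] using hpoly.exp
    have h2 := hasDerivAt_G z
    have h3 : HasDerivAt (fun w => ∫ s in (0 : ℝ)..w, Real.exp (-s ^ 2 / 2))
        (Real.exp (-z ^ 2 / 2)) z := (hcont.integral_hasStrictDerivAt 0 z).hasDerivAt
    have h4 := (h1.mul h2).sub h3
    refine h4.congr_deriv ?_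
    ring
  have hconst : F y = F 0 :=
    is_const_of_deriv_eq_zero (fun z => (hderiv z).differentiableAt)
      (fun z => (hderiv z).deriv) y 0
  have hF0 : F 0 = 0 := by
    have hG0 : G 0 = 0 := by
      rw [G]
      convert tsum_zero with n
      simp [g]
    simp [hF, hG0]
  have heq : Real.exp (-y ^ 2 / 2) * G y = ∫ s in (0 : ℝ)..y, Real.exp (-s ^ 2 / 2) := by
    have := hconst.trans hF0
    rw [hF] at this
    linarith [this]
  have hne : Real.exp (-y ^ 2 / 2) ≠ 0 := (Real.exp_pos _).ne'
  rw [← heq, ← mul_assoc, ← Real.exp_add]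
  rw [show y ^ 2 / 2 + -y ^ 2 / 2 = 0 by ring, Real.exp_zero, one_mul]

lemma poch_eval_32 (n : ℕ) :
    (ascPochhammer ℝ n).eval (3 / 2 : ℝ) = ((2 * n + 1)‼ : ℝ) / 2 ^ n := by
  induction n with
  | zero => simp [Nat.doubleFactorial]
  | succ n ih =>
    rw [ascPochhammer_succ_eval, ih, df_succ]
    push_cast
    field_simp
    ring

lemma yM_eq (y : ℝ) : y * M 1 (3 / 2) (y ^ 2 / 2) = G y := by
  rw [M, G, ← tsum_mul_left]
  apply tsum_congr
  intro n
  have hd := df_pos n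
  have hfac : (0 : ℝ) < (n ! : ℝ) := by exact_mod_cast Nat.factorial_pos n
  have h2n : (0 : ℝ) < (2 : ℝ) ^ n := by positivity
  rw [ascPochhammer_eval_one, poch_eval_32, g]
  rw [show (y ^ 2 / 2) ^ n = y ^ (2 * n) / 2 ^ n by rw [div_pow, pow_mul]]
  rw [pow_succ]
  field_simp

lemma M_exp (z : ℝ) : M (1 / 2) (1 / 2) z = Real.exp z := by
  rw [M]
  have h : ∀ n : ℕ,
      ((ascPochhammer ℝ n).eval (1 / 2 : ℝ) * z ^ n) /
        ((ascPochhammer ℝ n).eval (1 / 2 : ℝ) * (n ! : ℝ)) = z ^ n / (n ! : ℝ) := by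
    intro n
    exact mul_div_mul_left _ _ (ne_of_gt (ascPochhammer_pos n (1 / 2 : ℝ) (by norm_num)))
  rw [tsum_congr h, Real.exp_eq_exp_ℝ, NormedSpace.exp_eq_tsum_div]

lemma integrable_on_Iic (a : ℝ) :
    IntegrableOn (fun s : ℝ => Real.exp (-s ^ 2 / 2)) (Set.Iic a) := by
  have : (fun s : ℝ => Real.exp (-s ^ 2 / 2)) = fun s : ℝ => Real.exp (-(1 / 2 : ℝ) * s ^ 2) := by
    funext s; ring_nf
  rw [this]
  exact (integrable_exp_neg_mul_sq (by norm_num)).integrableOn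

lemma integral_Iic_zero :
    (∫ s in Set.Iic (0 : ℝ), Real.exp (-s ^ 2 / 2)) = Real.sqrt (π / 2) := by
  have h1 : (∫ s in Set.Iic (0 : ℝ), Real.exp (-s ^ 2 / 2))
      = ∫ s in Set.Iic (0 : ℝ), Real.exp (-(1 / 2 : ℝ) * (-s) ^ 2) := by
    have hfun : ∀ s : ℝ, Real.exp (-s ^ 2 / 2) = Real.exp (-(1 / 2 : ℝ) * (-s) ^ 2) := by
      intro s
      congr 1
      ring
    simp only [hfun]
  have h2 : (∫ s in Set.Iic (0 : ℝ), Real.exp (-(1 / 2 : ℝ) * (-s) ^ 2))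
      = ∫ x in Set.Ioi (-(0 : ℝ)), Real.exp (-(1 / 2 : ℝ) * x ^ 2) :=
    integral_comp_neg_Iic (0 : ℝ) (fun x => Real.exp (-(1 / 2 : ℝ) * x ^ 2))
  rw [h1, h2, neg_zero, integral_gaussian_Ioi]
  rw [show π / (1 / 2 : ℝ) = 2 * π by ring]
  have h3 : Real.sqrt (2 * π) = Real.sqrt (π / 2) * 2 := by
    rw [show 2 * π = (π / 2) * 2 ^ 2 by ring, Real.sqrt_mul (by positivity),
      Real.sqrt_sq (by norm_num : (0 : ℝ) ≤ 2)]
  rw [h3]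
  ring

end Stmt10Aux

theorem stmt_10 (y : ℝ) :
    y * M 1 (3 / 2) (y ^ 2 / 2) + Real.sqrt (Real.pi / 2) * M (1 / 2) (1 / 2) (y ^ 2 / 2) =
      Real.sqrt (2 * Real.pi) * Real.exp (y ^ 2 / 2) * Phi y := by
  rw [Stmt10Aux.yM_eq, Stmt10Aux.M_exp, Stmt10Aux.G_eq]
  unfold Phi
  have hIic : (∫ s in Set.Iic y, Real.exp (-s ^ 2 / 2))
      = Real.sqrt (π / 2) + ∫ s in (0 : ℝ)..y, Real.exp (-s ^ 2 / 2) := by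
    have h := intervalIntegral.integral_Iic_sub_Iic (Stmt10Aux.integrable_on_Iic 0)
      (Stmt10Aux.integrable_on_Iic y)
    rw [Stmt10Aux.integral_Iic_zero] at h
    linarith
  rw [hIic]
  have hs : (0 : ℝ) < Real.sqrt (2 * π) := Real.sqrt_pos.mpr (by positivity)
  field_simp
  ring
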